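/- In ℂ^{θ⁻¹}[G], for all g ∈ G and μ ∈ Ĝ∖G, the following equality holds: θ̂(μ,μ)⁻¹ · l_{μ²} · l_g = λ(g) · p^μ(l_g) · θ̂(μg,μg)⁻¹ · l_{(μg)²}. -/

import Mathlib

/-- Orientation-twisted loop transgression coefficient. -/
noncomputable def taurefl {Ghat : Type*} [Group Ghat] (π : Ghat →* ℤˣ)
    (θ : Ghat → Ghat → ℂ) (ω g : Ghat) : ℂ :=
  θ g⁻¹ g ^ ((((π ω : ℤˣ) : ℤ) - 1) / 2) *
    (θ (ω * g ^ ((π ω : ℤˣ) : ℤ) * ω⁻¹) ω / θ ω (g ^ ((π ω : ℤˣ) : ℤ)))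

/-- The basis element `l_g` of the twisted group algebra `ℂ^{θ⁻¹}[G]`, whose elements are
modelled as functions `Ĝ → ℂ` supported on `G = ker π`. -/
def ellG {Ghat : Type*} [DecidableEq Ghat] (g : Ghat) : Ghat → ℂ :=
  fun h => if h = g then 1 else 0

/-- Multiplication of `ℂ^{θ⁻¹}[G]` (determined by `l_g ⬝ l_h = θ(g,h)⁻¹ l_{gh}`) on
functions `Ĝ → ℂ` supported on `G = ker π`. -/
noncomputable def convG {Ghat : Type*} [Group Ghat] [Fintype Ghat] [DecidableEq Ghat]
    (π : Ghat →* ℤˣ) (θ : Ghat → Ghat → ℂ) (a b : Ghat → ℂ) : Ghat → ℂ :=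
  fun k => ∑ g ∈ Finset.univ.filter (fun g : Ghat => π g = 1),
    (θ g (g⁻¹ * k))⁻¹ * a g * b (g⁻¹ * k)

/-- Elements of `ℂ^{θ⁻¹}[G]` are supported on `G = ker π`. -/
def SupportedG {Ghat : Type*} [Group Ghat] (π : Ghat →* ℤˣ) (a : Ghat → ℂ) : Prop :=
  ∀ k : Ghat, π k ≠ 1 → a k = 0

/-- The (anti)automorphism `p^ω` of `ℂ^{θ⁻¹}[G]`, determined by
`p^ω(l_g) = λ(g)^{(π(ω)-1)/2} τ^refl(θ)([ω]g) l_{ωg^{π(ω)}ω⁻¹}`. -/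
noncomputable def pmapG {Ghat : Type*} [Group Ghat] (π : Ghat →* ℤˣ)
    (θ : Ghat → Ghat → ℂ) (lam : Ghat →* ℂ) (ω : Ghat) (a : Ghat → ℂ) : Ghat → ℂ :=
  fun k =>
    lam ((ω⁻¹ * k * ω) ^ ((π ω : ℤˣ) : ℤ)) ^ ((((π ω : ℤˣ) : ℤ) - 1) / 2) *
      taurefl π θ ω ((ω⁻¹ * k * ω) ^ ((π ω : ℤˣ) : ℤ)) *
        a ((ω⁻¹ * k * ω) ^ ((π ω : ℤˣ) : ℤ))

/-- Membership in the centre `Z(ℂ^{θ⁻¹}[G])`: supported on `G` and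
`a_{hgh⁻¹} = τ(θ)([h]g) a_g`. -/
def IsCentralG {Ghat : Type*} [Group Ghat] (π : Ghat →* ℤˣ)
    (θ : Ghat → Ghat → ℂ) (a : Ghat → ℂ) : Prop :=
  SupportedG π a ∧
    ∀ g h : Ghat, π g = 1 → π h = 1 →
      a (h * g * h⁻¹) = (θ (h * g * h⁻¹) h / θ h g) * a g

/-- The twisted Frobenius–Schur element `ν = Σ_{ς ∈ Ĝ∖G} (λ(ς)/θ(ς,ς)) l_{ς²}`, as a
function on `Ĝ`. -/
noncomputable def nuG {Ghat : Type*} [Group Ghat] [Fintype Ghat] [DecidableEq Ghat]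
    (π : Ghat →* ℤˣ) (θ : Ghat → Ghat → ℂ) (lam : Ghat →* ℂ) : Ghat → ℂ :=
  fun g => ∑ μ ∈ Finset.univ.filter (fun μ : Ghat => π μ = -1 ∧ μ ^ 2 = g),
    lam μ / θ μ μ

/-- Lemma 3.10 of the paper. In `ℂ^{θ⁻¹}[G]`, for `g ∈ G` and
`μ ∈ Ĝ∖G`: `θ(μ,μ)⁻¹ l_{μ²} ⬝ l_g = λ(g) p^μ(l_g) ⬝ θ(μg,μg)⁻¹ l_{(μg)²}`. -/

lemma conv_smul_left {Ghat : Type*} [Group Ghat] [Fintype Ghat] [DecidableEq Ghat]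
    (π : Ghat →* ℤˣ) (θ : Ghat → Ghat → ℂ) (c : ℂ) (a b : Ghat → ℂ) :
    convG π θ (c • a) b = c • convG π θ a b := by
  funext k
  simp only [convG, Pi.smul_apply, smul_eq_mul, Finset.mul_sum]
  exact Finset.sum_congr rfl fun x _ => by ring

lemma conv_smul_right {Ghat : Type*} [Group Ghat] [Fintype Ghat] [DecidableEq Ghat]
    (π : Ghat →* ℤˣ) (θ : Ghat → Ghat → ℂ) (c : ℂ) (a b : Ghat → ℂ) :
    convG π θ a (c • b) = c • convG π θ a b := by
  funext k
  simp only [convG, Pi.smul_apply, smul_eq_mul, Finset.mul_sum]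
  exact Finset.sum_congr rfl fun x _ => by ring

lemma conv_ell_ell {Ghat : Type*} [Group Ghat] [Fintype Ghat] [DecidableEq Ghat]
    (π : Ghat →* ℤˣ) (θ : Ghat → Ghat → ℂ) (a b : Ghat) (ha : π a = 1) :
    convG π θ (ellG a) (ellG b) = (θ a b)⁻¹ • ellG (a * b) := by
  funext k
  simp only [convG, Pi.smul_apply, smul_eq_mul]
  rw [Finset.sum_eq_single a]
  · by_cases hk : k = a * b
    · subst hk; simp [ellG]
    · have h2 : a⁻¹ * k ≠ b := fun h => hk (by rw [← h]; group)
      simp [ellG, hk, h2]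
  · intro x _ hx; simp [ellG, if_neg hx]
  · intro h; exact absurd (Finset.mem_filter.mpr ⟨Finset.mem_univ a, ha⟩) h

lemma pmap_ell {Ghat : Type*} [Group Ghat] [DecidableEq Ghat]
    (π : Ghat →* ℤˣ) (θ : Ghat → Ghat → ℂ) (lam : Ghat →* ℂ) (g μ : Ghat)
    (hμ : π μ = -1) :
    pmapG π θ lam μ (ellG g) =
      ((lam g)⁻¹ * taurefl π θ μ g) • ellG (μ * g⁻¹ * μ⁻¹) := by
  have hμz : ((π μ : ℤˣ) : ℤ) = -1 := by rw [hμ]; rfl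
  funext k
  simp only [pmapG, hμz, zpow_neg_one, show ((-1 : ℤ) - 1) / 2 = -1 by norm_num,
    Pi.smul_apply, smul_eq_mul]
  by_cases hk : k = μ * g⁻¹ * μ⁻¹
  · subst hk
    have h1 : (μ⁻¹ * (μ * g⁻¹ * μ⁻¹) * μ)⁻¹ = g := by group
    rw [h1]
    simp only [ellG, if_pos rfl, mul_one]
  · have h1 : (μ⁻¹ * k * μ)⁻¹ ≠ g := fun h => hk (by rw [← h]; group)
    simp only [ellG, if_neg h1, if_neg hk, mul_zero]

theorem stmt14 {Ghat : Type*} [Group Ghat] [Fintype Ghat] [DecidableEq Ghat]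
    (π : Ghat →* ℤˣ) (hπ : Function.Surjective π)
    (θ : Ghat → Ghat → ℂ)
    (hnorm : ∀ a b : Ghat, ‖θ a b‖ = 1)
    (hθe : ∀ ω : Ghat, θ ω 1 = 1) (hθe' : ∀ ω : Ghat, θ 1 ω = 1)
    (hcoc : ∀ ω₃ ω₂ ω₁ : Ghat, θ ω₃ ω₂ * θ (ω₃ * ω₂) ω₁ =
      θ ω₂ ω₁ ^ ((π ω₃ : ℤˣ) : ℤ) * θ ω₃ (ω₂ * ω₁))
    (lam : Ghat →* ℂ) (hlam : ∀ ω : Ghat, ‖lam ω‖ = 1)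
    (g μ : Ghat) (hg : π g = 1) (hμ : π μ = -1) :
    convG π θ ((θ μ μ)⁻¹ • ellG (μ ^ 2)) (ellG g) =
      lam g • convG π θ (pmapG π θ lam μ (ellG g))
        ((θ (μ * g) (μ * g))⁻¹ • ellG ((μ * g) ^ 2)) := by

  have hθne : ∀ a b : Ghat, θ a b ≠ 0 := fun a b h => by
    have := hnorm a b; rw [h] at this; simp at this
  have hlamne : ∀ a : Ghat, lam a ≠ 0 := fun a h => by
    have := hlam a; rw [h] at this; simp at this
  have hμz : ((π μ : ℤˣ) : ℤ) = -1 := by rw [hμ]; rfl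
  have hπμ2 : π (μ ^ 2) = 1 := by rw [map_pow, hμ]; rfl
  have hπc : π (μ * g⁻¹ * μ⁻¹) = 1 := by
    rw [map_mul, map_mul, map_inv, map_inv, hμ, hg]; rfl
  rw [conv_smul_left, conv_ell_ell π θ (μ ^ 2) g hπμ2, pmap_ell π θ lam g μ hμ,
    conv_smul_left, conv_smul_right, conv_ell_ell π θ (μ * g⁻¹ * μ⁻¹) ((μ * g) ^ 2) hπc,
    show μ * g⁻¹ * μ⁻¹ * (μ * g) ^ 2 = μ ^ 2 * g by rw [pow_two, pow_two]; group]
  simp only [smul_smul]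
  congr 1
  simp only [taurefl, hμz, zpow_neg_one, show ((-1 : ℤ) - 1) / 2 = -1 by norm_num]
  have hπc' : ((π (μ * g⁻¹ * μ⁻¹) : ℤˣ) : ℤ) = 1 := by rw [hπc]; rfl
  have hπμg : ((π (μ * g⁻¹) : ℤˣ) : ℤ) = -1 := by
    rw [map_mul, map_inv, hμ, hg]; rfl
  have f1 : θ g⁻¹ g * θ μ g⁻¹ * θ (μ * g⁻¹) g = 1 := by
    have h := hcoc μ g⁻¹ g
    rw [hμz, zpow_neg_one, inv_mul_cancel, hθe, mul_one] at h
    have h2 := congrArg (θ g⁻¹ g * ·) h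
    rw [mul_inv_cancel₀ (hθne g⁻¹ g)] at h2
    linear_combination h2
  have f2 : θ (μ * g⁻¹ * μ⁻¹) μ * θ (μ * g⁻¹) (g * (μ * g)) =
      θ μ (g * (μ * g)) * θ (μ * g⁻¹ * μ⁻¹) ((μ * g) ^ 2) := by
    have h := hcoc (μ * g⁻¹ * μ⁻¹) μ (g * (μ * g))
    rw [hπc', zpow_one, show μ * g⁻¹ * μ⁻¹ * μ = μ * g⁻¹ by group,
      show μ * (g * (μ * g)) = (μ * g) ^ 2 by rw [pow_two]; group] at h
    linear_combination h
  have f3 : θ (μ * g⁻¹) g * θ g (μ * g) * θ μ (μ * g) = θ (μ * g⁻¹) (g * (μ * g)) := by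
    have h := hcoc (μ * g⁻¹) g (μ * g)
    rw [hπμg, zpow_neg_one, show μ * g⁻¹ * g = μ by group] at h
    have h2 := congrArg (θ g (μ * g) * ·) h
    rw [mul_inv_cancel_left₀ (hθne g (μ * g))] at h2
    linear_combination h2
  have f4 : θ g (μ * g) * θ μ g * θ (μ * g) (μ * g) = θ μ (g * (μ * g)) := by
    have h := hcoc μ g (μ * g)
    rw [hμz, zpow_neg_one] at h
    have h2 := congrArg (θ g (μ * g) * ·) h
    rw [mul_inv_cancel_left₀ (hθne g (μ * g))] at h2
    linear_combination h2
  have f5 : θ μ g * θ μ μ * θ (μ ^ 2) g = θ μ (μ * g) := by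
    have h := hcoc μ μ g
    rw [hμz, zpow_neg_one, show μ * μ = μ ^ 2 by rw [pow_two]] at h
    have h2 := congrArg (θ μ g * ·) h
    rw [mul_inv_cancel_left₀ (hθne μ g)] at h2
    linear_combination h2
  have key : θ g (μ * g) * θ μ g * (θ g⁻¹ g * θ μ g⁻¹ * θ (μ * g⁻¹ * μ⁻¹) ((μ * g) ^ 2) *
        θ (μ * g) (μ * g)) =
      θ g (μ * g) * θ μ g * (θ μ μ * θ (μ ^ 2) g * θ (μ * g⁻¹ * μ⁻¹) μ) := by
    linear_combination θ g⁻¹ g * θ μ g⁻¹ * θ (μ * g⁻¹ * μ⁻¹) ((μ * g) ^ 2) * f4 -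
      θ g⁻¹ g * θ μ g⁻¹ * f2 - θ g⁻¹ g * θ μ g⁻¹ * θ (μ * g⁻¹ * μ⁻¹) μ * f3 +
      θ (μ * g⁻¹ * μ⁻¹) μ * θ g (μ * g) * θ μ (μ * g) * f1 -
      θ (μ * g⁻¹ * μ⁻¹) μ * θ g (μ * g) * f5
  have key2 : θ g⁻¹ g * θ μ g⁻¹ * θ (μ * g⁻¹ * μ⁻¹) ((μ * g) ^ 2) * θ (μ * g) (μ * g) =
      θ μ μ * θ (μ ^ 2) g * θ (μ * g⁻¹ * μ⁻¹) μ :=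
    mul_left_cancel₀ (mul_ne_zero (hθne g (μ * g)) (hθne μ g)) key
  have n1 := hθne g⁻¹ g
  have n2 := hθne μ g⁻¹
  have n4 := hθne (μ * g⁻¹ * μ⁻¹) μ
  have n7 := hθne (μ * g⁻¹ * μ⁻¹) ((μ * g) ^ 2)
  have n11 := hθne (μ * g) (μ * g)
  have n12 := hθne μ μ
  have n13 := hθne (μ ^ 2) g
  have nL := hlamne g
  set a1 := θ g⁻¹ g
  set a2 := θ μ g⁻¹
  set a4 := θ (μ * g⁻¹ * μ⁻¹) μ
  set a7 := θ (μ * g⁻¹ * μ⁻¹) ((μ * g) ^ 2)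
  set a11 := θ (μ * g) (μ * g)
  set a12 := θ μ μ
  set a13 := θ (μ ^ 2) g
  set L := lam g
  field_simp
  linear_combination key2
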